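/- Entropy decrease along backward evolution from a maliciously prepared initial state: Let 𝒫 be a Boltzmann partition of Ω closed under a time reversal T (T maps cells to cells), let U and U* be measure-preserving bijections satisfying U*(T(U(x))) = T(x) for all x, and let A ∈ 𝒫. Define the time-reversed evolved density g = (ρ_A ∘ U⁻¹) ∘ T. Then (i) the backward evolution carries g to the Boltzmann state of T(A): g ∘ (U*)⁻¹ = ρ_{T(A)}; and (ii) assuming Σ_{B∈𝒫} |Pr(B|A) log(Pr(B|A)/μ(B))| < ∞ with Pr(B|A) = μ(U(A) ∩ B)/μ(A), the coarse-grained Gibbs entropy of the initial state dominates that of the final state: S_G[Cg] ≥ log μ(A) = log μ(T(A)) = S_G[ρ_{T(A)}]. -/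

import Mathlib

open MeasureTheory Set

/-- The coarse-graining of a function `f` with respect to the partition `P`:
`(Cf)(x) = Σ_{B∈𝒫} (∫_B f dμ / μ(B)) χ_B(x)`. -/
noncomputable def coarseGrain {Ω : Type*} [MeasurableSpace Ω]
    (μ : Measure Ω) (P : ℕ → Set Ω) (f : Ω → ℝ) : Ω → ℝ :=
  fun x => ∑' n, Set.indicator (P n)
    (fun _ => (∫ y in P n, f y ∂μ) / (μ (P n)).toReal) x

/-- The Boltzmann state of a cell `A`: the probability density `ρ_A = χ_A / μ(A)`. -/
noncomputable def boltzmannState {Ω : Type*} [MeasurableSpace Ω]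
    (μ : Measure Ω) (A : Set Ω) : Ω → ℝ :=
  Set.indicator A (fun _ => ((μ A).toReal)⁻¹)

/-- The Gibbs entropy `S_G[ρ] = −∫ ρ log ρ dμ` (with `0 · log 0 = 0`). -/
noncomputable def gibbsEntropy {Ω : Type*} [MeasurableSpace Ω]
    (μ : Measure Ω) (ρ : Ω → ℝ) : ℝ :=
  - ∫ x, ρ x * Real.log (ρ x) ∂μ

/-- Entropy decrease along backward evolution from a maliciously prepared initial state:
with `g = (ρ_A ∘ U⁻¹) ∘ T` the time-reversed evolved density of a cell `A = P a`,
(i) the backward evolution carries `g` to the Boltzmann state of `T(A)`, i.e.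
`g ∘ (U*)⁻¹ = ρ_{T(A)}`; and (ii) the coarse-grained Gibbs entropy of the initial state
dominates that of the final state:
`S_G[Cg] ≥ log μ(A) = log μ(T(A)) = S_G[ρ_{T(A)}]`. -/
theorem entropy_decrease_backward_evolution {Ω : Type*} [MeasurableSpace Ω]
    (μ : Measure Ω) [SigmaFinite μ]
    (P : ℕ → Set Ω) (hPmeas : ∀ n, MeasurableSet (P n))
    (hPdisj : Pairwise (Function.onFun Disjoint P)) (hPcover : (⋃ n, P n) = Set.univ)
    (hPpos : ∀ n, 0 < μ (P n)) (hPfin : ∀ n, μ (P n) < ⊤)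
    (T : Ω → Ω) (hTmeas : Measurable T) (hT : MeasurePreserving T μ μ)
    (hTT : T ∘ T = id)
    (hTcell : ∀ n, ∃ m, T '' P n = P m)
    (U Ustar : Ω ≃ᵐ Ω) (hU : MeasurePreserving U μ μ)
    (hUstar : MeasurePreserving Ustar μ μ)
    (hrev : ∀ x, Ustar (T (U x)) = T x)
    (a : ℕ)
    (g : Ω → ℝ) (hg : g = fun x => boltzmannState μ (P a) (U.symm (T x)))
    (hsum : Summable (fun n =>
      |((μ (U '' P a ∩ P n)).toReal / (μ (P a)).toReal)
        * Real.log (((μ (U '' P a ∩ P n)).toReal / (μ (P a)).toReal)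
            / (μ (P n)).toReal)|)) :
    ((fun x => g (Ustar.symm x)) = boltzmannState μ (T '' P a))
      ∧ Real.log (μ (P a)).toReal ≤ gibbsEntropy μ (coarseGrain μ P g)
      ∧ Real.log (μ (P a)).toReal = Real.log (μ (T '' P a)).toReal
      ∧ Real.log (μ (T '' P a)).toReal = gibbsEntropy μ (boltzmannState μ (T '' P a)) := by
  -- basic facts about the involution T
  have hTinv : ∀ x, T (T x) = x := fun x => congrFun hTT x
  have hTpre : ∀ S : Set Ω, T '' S = T ⁻¹' S := by
    intro S; ext x
    constructor
    · rintro ⟨y, hy, rfl⟩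
      simpa [Set.mem_preimage, hTinv y] using hy
    · intro h; exact ⟨T x, h, hTinv x⟩
  have hμT : ∀ S : Set Ω, MeasurableSet S → μ (T '' S) = μ S := by
    intro S hS
    rw [hTpre]
    exact hT.measure_preimage hS.nullMeasurableSet
  have hc0 : (0:ℝ) < (μ (P a)).toReal := ENNReal.toReal_pos (hPpos a).ne' (hPfin a).ne
  have hμTA : μ (T '' P a) = μ (P a) := hμT _ (hPmeas a)
  -- part (i)
  have hkey : ∀ y, U.symm (T y) = T (Ustar y) := by
    intro y
    have h1 := hrev (U.symm (T y))
    rw [U.apply_symm_apply, hTinv] at h1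
    calc U.symm (T y) = T (T (U.symm (T y))) := (hTinv _).symm
      _ = T (Ustar y) := by rw [← h1]
  have hpart1 : (fun x => g (Ustar.symm x)) = boltzmannState μ (T '' P a) := by
    funext x
    rw [hg]
    show boltzmannState μ (P a) (U.symm (T (Ustar.symm x))) = _
    rw [hkey, Ustar.apply_symm_apply]
    unfold boltzmannState
    rw [hμTA, hTpre]
    by_cases hx : T x ∈ P a
    · rw [Set.indicator_of_mem hx, Set.indicator_of_mem (Set.mem_preimage.mpr hx)]
    · rw [Set.indicator_of_notMem hx,
        Set.indicator_of_notMem (fun h => hx (Set.mem_preimage.mp h))]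
  -- part (iii)
  have hpart3 : Real.log (μ (P a)).toReal = Real.log (μ (T '' P a)).toReal := by
    rw [hμTA]
  -- part (iv)
  have hpart4 : Real.log (μ (T '' P a)).toReal
      = gibbsEntropy μ (boltzmannState μ (T '' P a)) := by
    have hBm : MeasurableSet (T '' P a) := by
      rw [hTpre]; exact hTmeas (hPmeas a)
    have hb0 : (μ (T '' P a)).toReal ≠ 0 := by rw [hμTA]; exact hc0.ne'
    unfold gibbsEntropy boltzmannState
    have heq : (fun x => Set.indicator (T '' P a) (fun _ => ((μ (T '' P a)).toReal)⁻¹) x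
        * Real.log (Set.indicator (T '' P a) (fun _ => ((μ (T '' P a)).toReal)⁻¹) x))
        = Set.indicator (T '' P a)
          (fun _ => ((μ (T '' P a)).toReal)⁻¹ * Real.log (((μ (T '' P a)).toReal)⁻¹)) := by
      funext x; by_cases hx : x ∈ T '' P a <;> simp [hx]
    rw [heq, integral_indicator_const _ hBm, smul_eq_mul, measureReal_def, ← mul_assoc,
      mul_inv_cancel₀ hb0, one_mul, Real.log_inv, neg_neg]
  -- part (ii) setup
  set u : ℕ → ℝ := fun n =>
    ((μ (U '' P a ∩ P n)).toReal / (μ (P a)).toReal)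
      * Real.log (((μ (U '' P a ∩ P n)).toReal / (μ (P a)).toReal) / (μ (P n)).toReal)
    with hu_def
  have hsum' : Summable (fun n => |u n|) := by simpa only [hu_def] using hsum
  set q : ℕ → ℝ := fun n => (μ (U '' P a ∩ P n)).toReal / (μ (P a)).toReal with hq_def
  have huq : ∀ n, u n = q n * Real.log (q n / (μ (P n)).toReal) := by
    intro n; simp only [hu_def, hq_def]
  have hq_nonneg : ∀ n, 0 ≤ q n := by
    intro n; simp only [hq_def]; positivity
  have hm0 : ∀ n, (0:ℝ) < (μ (P n)).toReal :=
    fun n => ENNReal.toReal_pos (hPpos n).ne' (hPfin n).ne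
  -- the permutation of cells induced by T
  choose σ hσspec using hTcell
  have hcell_inj : ∀ {n k : ℕ}, P n = P k → n = k := by
    intro n k h
    by_contra hne
    have hd := hPdisj hne
    simp only [Function.onFun, h] at hd
    have he : P k = ∅ := by simpa using disjoint_self.mp hd
    have := hPpos k
    rw [he, measure_empty] at this
    exact lt_irrefl _ this
  have hTT_img : ∀ n, T '' (T '' P n) = P n := by
    intro n
    rw [hTpre (P n), hTpre, ← Set.preimage_comp, hTT, Set.preimage_id]
  have hσinv : Function.Involutive σ := by
    intro n
    apply hcell_inj
    rw [← hσspec (σ n), ← hσspec n, hTT_img]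
  have hμσ : ∀ n, (μ (P (σ n))).toReal = (μ (P n)).toReal := by
    intro n; rw [← hσspec n, hμT _ (hPmeas n)]
  -- measure of the evolved set
  have hA'pre : U '' P a = U.symm ⁻¹' (P a) := U.image_eq_preimage_symm _
  have hA'm : MeasurableSet (U '' P a) := by
    rw [hA'pre]; exact U.symm.measurable (hPmeas a)
  have hμA' : μ (U '' P a) = μ (P a) := by
    rw [hA'pre]
    exact (MeasurePreserving.symm U hU).measure_preimage (hPmeas a).nullMeasurableSet
  have hdisj' : Pairwise (Function.onFun Disjoint fun n => U '' P a ∩ P n) := by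
    intro i j hij
    exact (hPdisj hij).mono Set.inter_subset_right Set.inter_subset_right
  have hfin' : ∀ n, μ (U '' P a ∩ P n) ≠ ⊤ := fun n =>
    ((measure_mono Set.inter_subset_right).trans_lt (hPfin n)).ne
  have htsum_meas : ∑' n, μ (U '' P a ∩ P n) = μ (P a) := by
    rw [← measure_iUnion hdisj' (fun n => hA'm.inter (hPmeas n)), ← Set.inter_iUnion,
      hPcover, Set.inter_univ, hμA']
  have hq_summ : Summable q := by
    simp only [hq_def]
    exact (ENNReal.summable_toReal (by rw [htsum_meas]; exact (hPfin a).ne)).div_const _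
  have hq_tsum : ∑' n, q n = 1 := by
    simp only [hq_def]
    rw [tsum_div_const, ← ENNReal.tsum_toReal_eq hfin', htsum_meas]
    exact div_self hc0.ne'
  -- g is the indicator of T⁻¹(U(A))
  have hgind : g = Set.indicator (T ⁻¹' (U '' P a)) (fun _ => ((μ (P a)).toReal)⁻¹) := by
    funext x
    rw [hg]
    simp only [boltzmannState, hA'pre]
    by_cases hx : U.symm (T x) ∈ P a
    · rw [Set.indicator_of_mem hx, Set.indicator_of_mem (by exact hx)]
    · rw [Set.indicator_of_notMem hx, Set.indicator_of_notMem (by exact hx)]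
  -- the integral of g over each cell
  have hint : ∀ n, ∫ y in P n, g y ∂μ = q (σ n) := by
    intro n
    rw [hgind, setIntegral_indicator (hTmeas hA'm), setIntegral_const, smul_eq_mul]
    have h1 : P n ∩ T ⁻¹' (U '' P a) = T ⁻¹' (P (σ n) ∩ U '' P a) := by
      rw [Set.preimage_inter]
      congr 1
      rw [← hσspec n, hTpre, ← Set.preimage_comp, hTT, Set.preimage_id]
    rw [measureReal_def, h1, hT.measure_preimage ((hPmeas _).inter hA'm).nullMeasurableSet, Set.inter_comm]
    simp only [hq_def]
    rw [div_eq_mul_inv]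
  -- every point lies in a cell
  have hcell_mem : ∀ x : Ω, ∃ k, x ∈ P k := by
    intro x
    have : x ∈ ⋃ n, P n := by rw [hPcover]; trivial
    exact Set.mem_iUnion.mp this
  -- the coarse graining on a cell
  have hCg : ∀ k, ∀ x ∈ P k,
      coarseGrain μ P g x = q (σ k) / (μ (P k)).toReal := by
    intro k x hx
    unfold coarseGrain
    rw [tsum_eq_single k]
    · rw [Set.indicator_of_mem hx, hint k]
    · intro n hn
      exact Set.indicator_of_notMem
        (fun hxn => Set.disjoint_left.mp (hPdisj hn) hxn hx) _
  -- the integrand of the entropy as a sum of indicators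
  have hFmeas : ∀ n, AEStronglyMeasurable
      (Set.indicator (P n) (fun _ : Ω => (q (σ n) / (μ (P n)).toReal)
        * Real.log (q (σ n) / (μ (P n)).toReal))) μ :=
    fun n => (measurable_const.indicator (hPmeas n)).aestronglyMeasurable
  have hptwise : (fun x => coarseGrain μ P g x * Real.log (coarseGrain μ P g x))
      = fun x => ∑' n, Set.indicator (P n) (fun _ : Ω => (q (σ n) / (μ (P n)).toReal)
        * Real.log (q (σ n) / (μ (P n)).toReal)) x := by
    funext x
    obtain ⟨k, hk⟩ := hcell_mem x
    rw [hCg k x hk, tsum_eq_single k, Set.indicator_of_mem hk]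
    intro n hn
    exact Set.indicator_of_notMem
      (fun hxn => Set.disjoint_left.mp (hPdisj hn) hxn hk) _
  -- each term value
  have hterm : ∀ n, (μ (P n)).toReal * ((q (σ n) / (μ (P n)).toReal)
      * Real.log (q (σ n) / (μ (P n)).toReal)) = u (σ n) := by
    intro n
    rw [huq (σ n), hμσ n, ← mul_assoc, mul_div_cancel₀ _ (hm0 n).ne']
  have habs : ∀ n, |(q (σ n) / (μ (P n)).toReal)
      * Real.log (q (σ n) / (μ (P n)).toReal)| * (μ (P n)).toReal = |u (σ n)| := by
    intro n
    rw [← hterm n, abs_mul ((μ (P n)).toReal), abs_of_pos (hm0 n)]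
    exact mul_comm _ _
  -- reindexing by the involution σ
  have hreindexE : ∀ (f : ℕ → ENNReal), ∑' n, f (σ n) = ∑' n, f n :=
    fun f => Equiv.tsum_eq (Function.Involutive.toPerm σ hσinv) f
  have hreindexR : ∀ (f : ℕ → ℝ), ∑' n, f (σ n) = ∑' n, f n :=
    fun f => Equiv.tsum_eq (Function.Involutive.toPerm σ hσinv) f
  -- the lintegral bound for integral_tsum
  have hlint : ∑' n, ∫⁻ x, ‖Set.indicator (P n) (fun _ : Ω => (q (σ n) / (μ (P n)).toReal)
      * Real.log (q (σ n) / (μ (P n)).toReal)) x‖₊ ∂μ ≠ ⊤ := by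
    have heq : ∀ n, ∫⁻ x, ‖Set.indicator (P n) (fun _ : Ω => (q (σ n) / (μ (P n)).toReal)
        * Real.log (q (σ n) / (μ (P n)).toReal)) x‖₊ ∂μ = ENNReal.ofReal (|u (σ n)|) := by
      intro n
      have h2 : (fun x => (‖Set.indicator (P n) (fun _ : Ω => (q (σ n) / (μ (P n)).toReal)
          * Real.log (q (σ n) / (μ (P n)).toReal)) x‖₊ : ENNReal))
          = fun x => Set.indicator (P n) (fun _ : Ω => (‖(q (σ n) / (μ (P n)).toReal)
          * Real.log (q (σ n) / (μ (P n)).toReal)‖₊ : ENNReal)) x := by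
        funext x; by_cases hx : x ∈ P n <;> simp [hx]
      rw [h2, lintegral_indicator_const (hPmeas n), ← enorm_eq_nnnorm, Real.enorm_eq_ofReal_abs, ← habs n,
        ENNReal.ofReal_mul (abs_nonneg _), ENNReal.ofReal_toReal (hPfin n).ne]
    rw [tsum_congr heq, hreindexE (fun j => ENNReal.ofReal |u j|),
      ← ENNReal.ofReal_tsum_of_nonneg (fun j => abs_nonneg _) hsum']
    exact ENNReal.ofReal_ne_top
  -- the entropy as a series
  have hent : gibbsEntropy μ (coarseGrain μ P g) = -∑' j, u j := by
    unfold gibbsEntropy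
    rw [hptwise, integral_tsum hFmeas hlint]
    congr 1
    rw [← hreindexR u]
    exact tsum_congr fun n => by
      rw [integral_indicator_const _ (hPmeas n), smul_eq_mul, measureReal_def, hterm n]
  -- the termwise bound
  have hu_summ : Summable u := hsum'.of_abs
  have hbound : ∀ j, u j ≤ q j * Real.log (((μ (P a)).toReal)⁻¹) := by
    intro j
    rcases eq_or_lt_of_le (hq_nonneg j) with h0 | hpos
    · rw [huq j, ← h0, zero_mul, zero_mul]
    · have hnum : (μ (U '' P a ∩ P j)).toReal ≤ (μ (P j)).toReal :=
        ENNReal.toReal_mono (hPfin j).ne (measure_mono Set.inter_subset_right)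
      have hqle : q j ≤ (μ (P j)).toReal / (μ (P a)).toReal := by
        simp only [hq_def]
        gcongr
      have h1 : q j / (μ (P j)).toReal ≤ ((μ (P a)).toReal)⁻¹ := by
        rw [div_le_iff₀ (hm0 j)]
        calc q j ≤ (μ (P j)).toReal / (μ (P a)).toReal := hqle
          _ = ((μ (P a)).toReal)⁻¹ * (μ (P j)).toReal := by
              rw [div_eq_inv_mul]
      rw [huq j]
      exact mul_le_mul_of_nonneg_left
        (Real.log_le_log (div_pos hpos (hm0 j)) h1) (hq_nonneg j)
  have hsum_le : ∑' j, u j ≤ Real.log (((μ (P a)).toReal)⁻¹) := by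
    calc ∑' j, u j ≤ ∑' j, q j * Real.log (((μ (P a)).toReal)⁻¹) :=
          Summable.tsum_le_tsum hbound hu_summ (hq_summ.mul_right _)
      _ = Real.log (((μ (P a)).toReal)⁻¹) := by
          rw [tsum_mul_right, hq_tsum, one_mul]
  have hpart2 : Real.log (μ (P a)).toReal ≤ gibbsEntropy μ (coarseGrain μ P g) := by
    rw [hent]
    rw [Real.log_inv] at hsum_le
    linarith
  exact ⟨hpart1, hpart2, hpart3, hpart4⟩
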